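/- Let p be a prime, s an integer with s ≥ 2, q = p^s, and R = Z_q[u]/(u^2). Then the principal ideals (p) and (u) of R are incomparable (neither is contained in the other), so R is not a chain ring; moreover the ideal (p, u) of R is not a principal ideal, so R is not a principal ideal ring. -/

import Mathlib

open TrivSqZeroExt DualNumber in
/-- For `s ≥ 2`, in `R = Z_q[u]/(u^2)` the ideals `(p)` and `(u)` are incomparable
(so `R` is not a chain ring), and `(p, u)` is not principal (so `R` is not a
principal ideal ring). -/
theorem dualNumber_zmod_not_chain_not_principal (p s : ℕ) [Fact p.Prime] (hs : 2 ≤ s) :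
    ¬ (Ideal.span {(p : DualNumber (ZMod (p ^ s)))} ≤
        Ideal.span {(DualNumber.eps : DualNumber (ZMod (p ^ s)))}) ∧
    ¬ (Ideal.span {(DualNumber.eps : DualNumber (ZMod (p ^ s)))} ≤
        Ideal.span {(p : DualNumber (ZMod (p ^ s)))}) ∧
    ¬ (∀ I J : Ideal (DualNumber (ZMod (p ^ s))), I ≤ J ∨ J ≤ I) ∧
    ¬ (Ideal.span {(p : DualNumber (ZMod (p ^ s))),
        (DualNumber.eps : DualNumber (ZMod (p ^ s)))}).IsPrincipal ∧
    ¬ IsPrincipalIdealRing (DualNumber (ZMod (p ^ s))) := by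
  have hp := (Fact.out : p.Prime)
  have hplt : p < p ^ s := by
    calc p = p ^ 1 := (pow_one p).symm
    _ < p ^ s := Nat.pow_lt_pow_right hp.one_lt (by omega)
  -- p ≠ 0 in ZMod (p^s)
  have hp0 : (p : ZMod (p ^ s)) ≠ 0 := by
    rw [Ne, ZMod.natCast_eq_zero_iff]
    intro h
    exact absurd (Nat.le_of_dvd hp.pos h) (by omega)
  -- p is not a unit in ZMod (p^s)
  have hpu : ¬ IsUnit (p : ZMod (p ^ s)) := by
    rw [ZMod.isUnit_iff_coprime]
    intro h
    exact (hp.coprime_iff_not_dvd.mp h) (dvd_pow_self p (by omega))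
  -- p is not divisible by p² in ZMod (p^s)
  have hp2 : ∀ t : ZMod (p ^ s), (p : ZMod (p ^ s)) ≠ (p : ZMod (p ^ s)) ^ 2 * t := by
    intro t h
    have hdvd : p ^ 2 ∣ p ^ s := pow_dvd_pow p hs
    have := congrArg (ZMod.castHom hdvd (ZMod (p ^ 2))) h
    simp only [map_mul, map_pow, map_natCast] at this
    rw [show ((p : ZMod (p ^ 2)) ^ 2 : ZMod (p ^ 2)) = ((p ^ 2 : ℕ) : ZMod (p ^ 2)) by push_cast; ring,
      ZMod.natCast_self, zero_mul, ZMod.natCast_eq_zero_iff] at this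
    have := Nat.le_of_dvd hp.pos this
    have : p < p ^ 2 := by
      calc p = p ^ 1 := (pow_one p).symm
      _ < p ^ 2 := Nat.pow_lt_pow_right hp.one_lt one_lt_two
    omega
  have h1 : ¬ (Ideal.span {(p : DualNumber (ZMod (p ^ s)))} ≤
      Ideal.span {(DualNumber.eps : DualNumber (ZMod (p ^ s)))}) := by
    intro h
    have := h (Ideal.mem_span_singleton_self _)
    rw [Ideal.mem_span_singleton] at this
    obtain ⟨z, hz⟩ := this
    have := congrArg TrivSqZeroExt.fst hz
    simp [TrivSqZeroExt.fst_mul] at this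
    exact hp0 this
  have h2 : ¬ (Ideal.span {(DualNumber.eps : DualNumber (ZMod (p ^ s)))} ≤
      Ideal.span {(p : DualNumber (ZMod (p ^ s)))}) := by
    intro h
    have := h (Ideal.mem_span_singleton_self _)
    rw [Ideal.mem_span_singleton] at this
    obtain ⟨z, hz⟩ := this
    have := congrArg TrivSqZeroExt.snd hz
    simp [TrivSqZeroExt.snd_mul] at this
    exact hpu (IsUnit.of_mul_eq_one _ this.symm)
  have h4 : ¬ (Ideal.span {(p : DualNumber (ZMod (p ^ s))),
      (DualNumber.eps : DualNumber (ZMod (p ^ s)))}).IsPrincipal := by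
    rintro ⟨g, hg0⟩
    have hg : Ideal.span {(p : DualNumber (ZMod (p ^ s))), (DualNumber.eps : DualNumber (ZMod (p ^ s)))} = Ideal.span {g} := hg0
    -- g ∈ span {p, ε}
    have hgmem : g ∈ Ideal.span {(p : DualNumber (ZMod (p ^ s))),
        (DualNumber.eps : DualNumber (ZMod (p ^ s)))} := by
      rw [hg]; exact Ideal.mem_span_singleton_self _
    rw [Ideal.mem_span_pair] at hgmem
    obtain ⟨x, y, hxy⟩ := hgmem
    have ha : g.fst = (p : ZMod (p ^ s)) * x.fst := by
      have := congrArg TrivSqZeroExt.fst hxy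
      simp [TrivSqZeroExt.fst_mul] at this
      rw [← this]; ring
    have hεmem : (DualNumber.eps : DualNumber (ZMod (p ^ s))) ∈ Ideal.span {g} := by
      rw [← hg]
      exact Ideal.subset_span (by simp)
    rw [Ideal.mem_span_singleton] at hεmem
    obtain ⟨c, hc⟩ := hεmem
    have hpmem : ((p : DualNumber (ZMod (p ^ s)))) ∈ Ideal.span {g} := by
      rw [← hg]
      exact Ideal.subset_span (by simp)
    rw [Ideal.mem_span_singleton] at hpmem
    obtain ⟨d, hd⟩ := hpmem
    have hc1 : g.fst * c.fst = 0 := by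
      have := congrArg TrivSqZeroExt.fst hc
      simp [TrivSqZeroExt.fst_mul] at this
      exact this.symm
    have hc2 : (1 : ZMod (p ^ s)) = g.fst * c.snd + c.fst * g.snd := by
      have := congrArg TrivSqZeroExt.snd hc
      simpa [TrivSqZeroExt.snd_mul, mul_comm] using this
    have hd1 : (p : ZMod (p ^ s)) = g.fst * d.fst := by
      have := congrArg TrivSqZeroExt.fst hd
      simpa [TrivSqZeroExt.fst_mul] using this
    apply hp2 (x.fst ^ 2 * d.fst * c.snd)
    calc (p : ZMod (p ^ s)) = (p : ZMod (p ^ s)) * 1 := (mul_one _).symm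
      _ = (g.fst * d.fst) * (g.fst * c.snd + c.fst * g.snd) := by rw [← hd1, ← hc2]
      _ = g.fst * g.fst * d.fst * c.snd + (g.fst * c.fst) * (d.fst * g.snd) := by ring
      _ = (p : ZMod (p ^ s)) ^ 2 * (x.fst ^ 2 * d.fst * c.snd) := by
          rw [hc1, ha]; ring
  refine ⟨h1, h2, ?_, h4, ?_⟩
  · intro h
    rcases h (Ideal.span {(p : DualNumber (ZMod (p ^ s)))})
      (Ideal.span {(DualNumber.eps : DualNumber (ZMod (p ^ s)))}) with h | h
    · exact h1 h
    · exact h2 h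
  · intro h
    exact h4 (h.principal _)
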